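/- Let C ⊆ 𝔽₂ⁿ and C′ ⊆ 𝔽₂^{n′} be 2-summable binary linear codes. Then: (a) dim(C ⊕₂ C′) = dim C + dim C′ − 1; (b) if the code obtained from C by shortening at its last coordinate contains a nonzero word, then C ⊕₂ C′ contains a nonzero word and d(C ⊕₂ C′) ≤ d(C∖{n}); similarly, if the code obtained from C′ by shortening at its first coordinate contains a nonzero word, then d(C ⊕₂ C′) ≤ d(C′∖{1}). -/
import Mathlib


open scoped BigOperators

/-- A binary linear code of length `n`: an `𝔽₂`-linear subspace of `𝔽₂ⁿ`. -/
abbrev Code (n : ℕ) : Type := Submodule (ZMod 2) (Fin n → ZMod 2)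

/-- The `𝔽₂`-dimension of a code. -/
noncomputable def codeDim {n : ℕ} (C : Code n) : ℕ := Module.finrank (ZMod 2) C

/-- The dual code `C⊥ = {x : ∀ c ∈ C, ∑ i, x i * c i = 0}`. -/
def dualCode {n : ℕ} (C : Code n) : Code n where
  carrier := {x | ∀ c ∈ C, ∑ i, x i * c i = 0}
  add_mem' := by
    intro a b ha hb c hc
    simp only [Set.mem_setOf_eq] at ha hb
    simp [Pi.add_apply, add_mul, Finset.sum_add_distrib, ha c hc, hb c hc]
  zero_mem' := by intro c hc; simp
  smul_mem' := by
    intro t x hx c hc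
    simp only [Set.mem_setOf_eq] at hx
    simp [Pi.smul_apply, smul_eq_mul, mul_assoc, ← Finset.mul_sum, hx c hc]

/-- Restriction (projection) of a code onto the coordinates in a finset `s`,
viewed as a code of length `s.card`. -/
noncomputable def restrictCode {n : ℕ} (C : Code n) (s : Finset (Fin n)) : Code s.card :=
  C.map (LinearMap.funLeft (ZMod 2) (ZMod 2) (fun j => (s.orderIsoOfFin rfl j).1))

/-- `(J, Jᶜ)` is a `k`-separation of `C`. -/
noncomputable def IsKSep {n : ℕ} (k : ℕ) (C : Code n) (J : Finset (Fin n)) : Prop :=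
  k ≤ J.card ∧ k ≤ Jᶜ.card ∧
    codeDim (restrictCode C J) + codeDim (restrictCode C Jᶜ) ≤ codeDim C + (k - 1)

/-- `(J, Jᶜ)` is an exact `k`-separation of `C`. -/
noncomputable def IsExactKSep {n : ℕ} (k : ℕ) (C : Code n) (J : Finset (Fin n)) : Prop :=
  k ≤ J.card ∧ k ≤ Jᶜ.card ∧
    codeDim (restrictCode C J) + codeDim (restrictCode C Jᶜ) = codeDim C + (k - 1)

/-- `C` is `k`-connected: it has no `k'`-separation for any `1 ≤ k' < k`. -/
noncomputable def KConnected {n : ℕ} (k : ℕ) (C : Code n) : Prop :=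
  ∀ k' : ℕ, 1 ≤ k' → k' < k → ∀ J : Finset (Fin n), ¬ IsKSep k' C J

/-- A `3`-connected code is internally `4`-connected if all its `3`-separations are minimal. -/
noncomputable def Internally4Connected {n : ℕ} (C : Code n) : Prop :=
  KConnected 3 C ∧ ∀ J : Finset (Fin n), IsKSep 3 C J → (J.card = 3 ∨ Jᶜ.card = 3)

/-- The submodule of words vanishing on all coordinates in `Y`. -/
def zeroOn {n : ℕ} (Y : Finset (Fin n)) : Code n where
  carrier := {x | ∀ i ∈ Y, x i = 0}
  add_mem' := by intro a b ha hb i hi; simp [Pi.add_apply, ha i hi, hb i hi]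
  zero_mem' := by intro i _; rfl
  smul_mem' := by intro t x hx i hi; simp [Pi.smul_apply, hx i hi]

/-- The punctured code `C/X`: project away the coordinates in `X`. -/
noncomputable def punctureCode {n : ℕ} (C : Code n) (X : Finset (Fin n)) : Code Xᶜ.card :=
  restrictCode C Xᶜ

/-- The shortened code `C∖Y`. -/
noncomputable def shortenCode {n : ℕ} (C : Code n) (Y : Finset (Fin n)) : Code Yᶜ.card :=
  restrictCode (C ⊓ zeroOn Y) Yᶜ

/-- The minor `C/X∖Y` of `C` (for disjoint `X`, `Y`). -/
noncomputable def minorCode {n : ℕ} (C : Code n) (X Y : Finset (Fin n)) :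
    Code ((X ∪ Y)ᶜ.card) :=
  restrictCode (C ⊓ zeroOn Y) (X ∪ Y)ᶜ

/-- Equivalence of codes: one is obtained from the other by a bijective relabelling
(permutation) of coordinates. -/
def CodeEquiv {m m' : ℕ} (D : Code m) (D' : Code m') : Prop :=
  ∃ e : Fin m ≃ Fin m',
    D' = D.map (LinearMap.funLeft (ZMod 2) (ZMod 2) e.symm)

/-- `D` is equivalent to a minor of `C`. -/
noncomputable def EquivToMinor {m n : ℕ} (D : Code m) (C : Code n) : Prop :=
  ∃ X Y : Finset (Fin n), Disjoint X Y ∧ CodeEquiv D (minorCode C X Y)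

/-- `D` is equivalent to a proper minor of `C`. -/
noncomputable def EquivToProperMinor {m n : ℕ} (D : Code m) (C : Code n) : Prop :=
  ∃ X Y : Finset (Fin n), Disjoint X Y ∧ (X ∪ Y).Nonempty ∧ CodeEquiv D (minorCode C X Y)

/-- The word `(0,…,0,1)`. -/
def unitLast (n : ℕ) : Fin n → ZMod 2 := fun i => if (i : ℕ) = n - 1 then 1 else 0

/-- The word `(1,0,…,0)`. -/
def unitFirst (n : ℕ) : Fin n → ZMod 2 := fun i => if (i : ℕ) = 0 then 1 else 0

/-- The word `(0,…,0,1,1,1)`. -/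
def omegaLast (n : ℕ) : Fin n → ZMod 2 := fun i => if n - 3 ≤ (i : ℕ) then 1 else 0

/-- The word `(1,1,1,0,…,0)`. -/
def omegaFirst (n : ℕ) : Fin n → ZMod 2 := fun i => if (i : ℕ) < 3 then 1 else 0

/-- Codes `C ⊆ 𝔽₂ⁿ`, `C' ⊆ 𝔽₂^n'` (with `n, n' ≥ 3`) are 2-summable. -/
def TwoSummable {n n' : ℕ} (C : Code n) (C' : Code n') : Prop :=
  3 ≤ n ∧ 3 ≤ n' ∧ unitLast n ∉ C ∧ unitLast n ∉ dualCode C ∧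
    unitFirst n' ∉ C' ∧ unitFirst n' ∉ dualCode C'

/-- The 2-sum `C ⊕₂ C'`. -/
def twoSum {n n' : ℕ} (C : Code n) (C' : Code n') (hn : 3 ≤ n) (hn' : 3 ≤ n') :
    Code (n - 1 + (n' - 1)) where
  carrier := {x | ∃ c ∈ C, ∃ c' ∈ C',
    c ⟨n - 1, by omega⟩ = c' ⟨0, by omega⟩ ∧
    ∀ i : Fin (n - 1 + (n' - 1)),
      x i = if h : (i : ℕ) < n - 1 then c ⟨(i : ℕ), by omega⟩
            else c' ⟨(i : ℕ) - (n - 1) + 1, by have := i.isLt; omega⟩}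
  add_mem' := by
    rintro a b ⟨c, hc, c', hc', he, ha⟩ ⟨d, hd, d', hd', he', hb⟩
    refine ⟨c + d, C.add_mem hc hd, c' + d', C'.add_mem hc' hd',
      by simp [Pi.add_apply, he, he'], fun i => ?_⟩
    by_cases h : (i : ℕ) < n - 1 <;> simp [Pi.add_apply, ha i, hb i, h]
  zero_mem' := by
    refine ⟨0, C.zero_mem, 0, C'.zero_mem, rfl, fun i => ?_⟩
    by_cases h : (i : ℕ) < n - 1 <;> simp [h]
  smul_mem' := by
    rintro t x ⟨c, hc, c', hc', he, hx⟩
    refine ⟨t • c, C.smul_mem t hc, t • c', C'.smul_mem t hc',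
      by simp [Pi.smul_apply, he], fun i => ?_⟩
    by_cases h : (i : ℕ) < n - 1 <;> simp [Pi.smul_apply, hx i, h]

/-- Condition (A1): no word of `C` supported on the last three coordinates has
Hamming weight 1 or 2 there. -/
def NoLowWtTail {n : ℕ} (C : Code n) : Prop :=
  ∀ c ∈ C, (∀ i : Fin n, (i : ℕ) < n - 3 → c i = 0) →
    ((∀ i : Fin n, n - 3 ≤ (i : ℕ) → c i = 0) ∨ (∀ i : Fin n, n - 3 ≤ (i : ℕ) → c i = 1))

/-- Condition (A2): no word of `C'` supported on the first three coordinates has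
Hamming weight 1 or 2 there. -/
def NoLowWtHead {n : ℕ} (C : Code n) : Prop :=
  ∀ c ∈ C, (∀ i : Fin n, 3 ≤ (i : ℕ) → c i = 0) →
    ((∀ i : Fin n, (i : ℕ) < 3 → c i = 0) ∨ (∀ i : Fin n, (i : ℕ) < 3 → c i = 1))

/-- Codes `C ⊆ 𝔽₂ⁿ`, `C' ⊆ 𝔽₂^n'` (with `n, n' ≥ 7`) are 3-summable: (A1), (A2), (A3). -/
def ThreeSummable {n n' : ℕ} (C : Code n) (C' : Code n') : Prop :=
  7 ≤ n ∧ 7 ≤ n' ∧ NoLowWtTail C ∧ NoLowWtTail (dualCode C) ∧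
    NoLowWtHead C' ∧ NoLowWtHead (dualCode C') ∧
    omegaLast n ∈ C ∧ omegaFirst n' ∈ C'

/-- The 3-sum `C ⊕₃ C'`. -/
def threeSum {n n' : ℕ} (C : Code n) (C' : Code n') (hn : 7 ≤ n) (hn' : 7 ≤ n') :
    Code (n - 3 + (n' - 3)) where
  carrier := {x | ∃ c ∈ C, ∃ c' ∈ C',
    (∀ t : Fin 3, c ⟨n - 3 + (t : ℕ), by have := t.isLt; omega⟩
        = c' ⟨(t : ℕ), by have := t.isLt; omega⟩) ∧
    ∀ i : Fin (n - 3 + (n' - 3)),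
      x i = if h : (i : ℕ) < n - 3 then c ⟨(i : ℕ), by omega⟩
            else c' ⟨(i : ℕ) - (n - 3) + 3, by have := i.isLt; omega⟩}
  add_mem' := by
    rintro a b ⟨c, hc, c', hc', he, ha⟩ ⟨d, hd, d', hd', he', hb⟩
    refine ⟨c + d, C.add_mem hc hd, c' + d', C'.add_mem hc' hd',
      fun t => by simp [Pi.add_apply, he t, he' t], fun i => ?_⟩
    by_cases h : (i : ℕ) < n - 3 <;> simp [Pi.add_apply, ha i, hb i, h]
  zero_mem' := by
    refine ⟨0, C.zero_mem, 0, C'.zero_mem, fun t => rfl, fun i => ?_⟩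
    by_cases h : (i : ℕ) < n - 3 <;> simp [h]
  smul_mem' := by
    rintro t x ⟨c, hc, c', hc', he, hx⟩
    refine ⟨t • c, C.smul_mem t hc, t • c', C'.smul_mem t hc',
      fun s => by simp [Pi.smul_apply, he s], fun i => ?_⟩
    by_cases h : (i : ℕ) < n - 3 <;> simp [Pi.smul_apply, hx i, h]

/-- Codes `C`, `C'` (with `n, n' ≥ 7`) are 3̄-summable: (A1), (A2), (A3'). -/
def ThreeBarSummable {n n' : ℕ} (C : Code n) (C' : Code n') : Prop :=
  7 ≤ n ∧ 7 ≤ n' ∧ NoLowWtTail C ∧ NoLowWtTail (dualCode C) ∧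
    NoLowWtHead C' ∧ NoLowWtHead (dualCode C') ∧
    omegaLast n ∈ dualCode C ∧ omegaFirst n' ∈ dualCode C'

/-- `C̄ = C ∪ ((0,…,0,1,1,1) + C)`, as a submodule. -/
def extendLast {n : ℕ} (C : Code n) : Code n :=
  C ⊔ Submodule.span (ZMod 2) {omegaLast n}

/-- `C̄' = C' ∪ ((1,1,1,0,…,0) + C')`, as a submodule. -/
def extendFirst {n : ℕ} (C : Code n) : Code n :=
  C ⊔ Submodule.span (ZMod 2) {omegaFirst n}

/-- The 3̄-sum `C ⊕̄₃ C' = C̄ ⊕₃ C̄'`. -/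
def threeBarSum {n n' : ℕ} (C : Code n) (C' : Code n') (hn : 7 ≤ n) (hn' : 7 ≤ n') :
    Code (n - 3 + (n' - 3)) :=
  threeSum (extendLast C) (extendFirst C') hn hn'

/-- The minimum Hamming distance (minimum weight of a nonzero codeword). -/
noncomputable def minDist {n : ℕ} (C : Code n) : ℕ :=
  sInf {w | ∃ c ∈ C, c ≠ 0 ∧ hammingNorm c = w}

/-- `C` is graphic: it has a parity-check matrix, each column of which has at most
two nonzero entries (a vertex–edge incidence matrix of a multigraph). -/
def IsGraphic {n : ℕ} (C : Code n) : Prop :=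
  ∃ (m : ℕ) (H : Matrix (Fin m) (Fin n) (ZMod 2)),
    C = LinearMap.ker (Matrix.mulVecLin H) ∧
    ∀ j : Fin n, ({i : Fin m | H i j ≠ 0} : Set (Fin m)).ncard ≤ 2

/-- `C` is regular: some parity-check matrix of `C` has a totally unimodular signing. -/
def IsRegularCode {n : ℕ} (C : Code n) : Prop :=
  ∃ (m : ℕ) (H : Matrix (Fin m) (Fin n) (ZMod 2)),
    C = LinearMap.ker (Matrix.mulVecLin H) ∧
    ∃ A : Matrix (Fin m) (Fin n) ℝ,
      (∀ i j, H i j = 0 → A i j = 0) ∧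
      (∀ i j, H i j = 1 → (A i j = 1 ∨ A i j = -1)) ∧
      A.IsTotallyUnimodular

/-- The 3×7 parity-check matrix of the `[7,4]` Hamming code: the `j`-th column is the
binary representation of `j` (for `j = 1, …, 7`). -/
def hammingMatrix : Matrix (Fin 3) (Fin 7) (ZMod 2) :=
  fun i j => if Nat.testBit ((j : ℕ) + 1) (i : ℕ) then 1 else 0

/-- The `[7,4]` Hamming code `H₇`. -/
def hammingCode : Code 7 := LinearMap.ker (Matrix.mulVecLin hammingMatrix)

/-- Generator matrix of `C(K₅)⊥`. -/
def K5perpGen : Matrix (Fin 4) (Fin 10) (ZMod 2) :=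
  !![1,0,0,0,1,1,1,0,0,0;
     0,1,0,0,1,0,0,1,1,0;
     0,0,1,0,0,1,0,1,0,1;
     0,0,0,1,0,0,1,0,1,1]

/-- The `[10,4]` code `C(K₅)⊥`. -/
def codeK5perp : Code 10 := Submodule.span (ZMod 2) (Set.range (fun i => K5perpGen i))

/-- Generator matrix of `C(K₃,₃)⊥`. -/
def K33perpGen : Matrix (Fin 5) (Fin 9) (ZMod 2) :=
  !![1,0,0,0,0,1,1,0,0;
     0,1,0,0,0,0,1,1,0;
     0,0,1,0,0,0,0,1,1;
     0,0,0,1,0,1,0,0,1;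
     0,0,0,0,1,1,1,1,1]

/-- The `[9,5]` code `C(K₃,₃)⊥`. -/
def codeK33perp : Code 9 := Submodule.span (ZMod 2) (Set.range (fun i => K33perpGen i))

/-- Parity-check matrix of `R₁₀`. -/
def R10Matrix : Matrix (Fin 5) (Fin 10) (ZMod 2) :=
  !![1,1,0,0,1,1,0,0,0,0;
     1,1,1,0,0,0,1,0,0,0;
     0,1,1,1,0,0,0,1,0,0;
     0,0,1,1,1,0,0,0,1,0;
     1,0,0,1,1,0,0,0,0,1]

/-- The `[10,5]` code `R₁₀`. -/
def codeR10 : Code 10 := LinearMap.ker (Matrix.mulVecLin R10Matrix)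

/-- The embedding `𝔽₂ⁿ ↪ ℝⁿ` identifying `𝔽₂` with `{0,1} ⊆ ℝ`. -/
def toReal {n : ℕ} (c : Fin n → ZMod 2) : Fin n → ℝ := fun i => ((c i).val : ℝ)

/-- The codeword polytope `P(C)`: the convex hull in `ℝⁿ` of a set of codewords. -/
def codewordPolytope {n : ℕ} (C : Set (Fin n → ZMod 2)) : Set (Fin n → ℝ) :=
  convexHull ℝ (toReal '' C)

/-- The fundamental polytope `Q(H) = ⋂_{h ∈ H} P(h⊥)` (with `Q(∅) = [0,1]ⁿ`). -/
def Qpoly {n : ℕ} (H : Set (Fin n → ZMod 2)) : Set (Fin n → ℝ) :=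
  {x | ∀ i, x i ∈ Set.Icc (0 : ℝ) 1} ∩
    ⋂ h ∈ H, codewordPolytope {c | ∑ i, h i * c i = 0}

/-- `C` is geometrically perfect: `P(C) = Q(C⊥)`. -/
def GeomPerfect {n : ℕ} (C : Code n) : Prop :=
  codewordPolytope (C : Set (Fin n → ZMod 2)) = Qpoly (dualCode C : Set (Fin n → ZMod 2))

/-- A family of binary linear codes (one set of codes for each length), closed under
taking codes equivalent to minors of its members. -/
noncomputable def MinorClosedFamily (F : ∀ n : ℕ, Set (Code n)) : Prop :=
  ∀ (n m : ℕ) (C : Code n) (D : Code m), C ∈ F n → EquivToMinor D C → D ∈ F m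

/-- An almost-graphic family of codes. -/
noncomputable def AlmostGraphic (F : ∀ n : ℕ, Set (Code n)) : Prop :=
  MinorClosedFamily F ∧
  ∃ D : ∀ n : ℕ, Set (Code n),
    (∀ n, D n ⊆ F n) ∧
    {p : (n : ℕ) × Code n | p.2 ∈ D p.1}.Finite ∧
    ∀ (n : ℕ) (C : Code n), C ∈ F n → KConnected 2 C →
      (IsGraphic C ∨ C ∈ D n) ∨
      (∃ (n₁ n₂ : ℕ) (hn₁ : 3 ≤ n₁) (hn₂ : 3 ≤ n₂) (C₁ : Code n₁) (C₂ : Code n₂),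
        TwoSummable C₁ C₂ ∧ EquivToMinor C₁ C ∧ EquivToMinor C₂ C ∧
        (IsGraphic C₁ ∨ C₁ ∈ D n₁) ∧ KConnected 2 C₂ ∧
        CodeEquiv C (twoSum C₁ C₂ hn₁ hn₂)) ∨
      (∃ (n₁ n₂ : ℕ) (hn₁ : 7 ≤ n₁) (hn₂ : 7 ≤ n₂) (C₁ : Code n₁) (C₂ : Code n₂),
        ThreeBarSummable C₁ C₂ ∧ EquivToMinor C₁ C ∧ EquivToMinor C₂ C ∧
        (IsGraphic C₁ ∨ C₁ ∈ D n₁) ∧ KConnected 2 C₂ ∧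
        CodeEquiv C (threeBarSum C₁ C₂ hn₁ hn₂))

section TwoSumAux

private lemma zmod2_eq_one {a : ZMod 2} (ha : a ≠ 0) : a = 1 := by
  revert a; decide

private lemma hn_comp {m N : ℕ} (e : Fin m → Fin N) (he : Function.Injective e)
    (c : Fin N → ZMod 2) (hc : ∀ i : Fin N, (∀ j, e j ≠ i) → c i = 0) :
    hammingNorm (fun j => c (e j)) = hammingNorm c := by
  unfold hammingNorm
  refine Finset.card_bij (fun j _ => e j) ?_ ?_ ?_
  · intro a ha
    simp only [Finset.mem_filter, Finset.mem_univ, true_and] at ha ⊢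
    exact ha
  · intro a _ b _ hab
    exact he hab
  · intro i hi
    simp only [Finset.mem_filter, Finset.mem_univ, true_and] at hi
    by_contra hcon
    push_neg at hcon
    apply hi
    apply hc
    intro j hj
    have hjm : j ∈ Finset.filter (fun j => c (e j) ≠ 0) Finset.univ := by
      simp only [Finset.mem_filter, Finset.mem_univ, true_and]
      rw [hj]; exact hi
    exact hcon j hjm hj

private def tsLin (n n' : ℕ) :
    ((Fin n → ZMod 2) × (Fin n' → ZMod 2)) →ₗ[ZMod 2] (Fin (n-1+(n'-1)) → ZMod 2) where
  toFun p := fun i => if h : (i : ℕ) < n - 1 then p.1 ⟨(i : ℕ), by omega⟩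
      else p.2 ⟨(i : ℕ) - (n-1) + 1, by have := i.isLt; omega⟩
  map_add' p q := by funext i; by_cases hi : (i : ℕ) < n - 1 <;> simp [hi]
  map_smul' t p := by funext i; by_cases hi : (i : ℕ) < n - 1 <;> simp [hi]

private lemma tsLin_apply (n n' : ℕ) (p : (Fin n → ZMod 2) × (Fin n' → ZMod 2))
    (i : Fin (n-1+(n'-1))) :
    tsLin n n' p i = if h : (i : ℕ) < n - 1 then p.1 ⟨(i : ℕ), by omega⟩
      else p.2 ⟨(i : ℕ) - (n-1) + 1, by have := i.isLt; omega⟩ := rfl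

private def fuseL (n n' : ℕ) (hn : 1 ≤ n) (hn' : 1 ≤ n') :
    ((Fin n → ZMod 2) × (Fin n' → ZMod 2)) →ₗ[ZMod 2] ZMod 2 where
  toFun p := p.1 ⟨n-1, by omega⟩ - p.2 ⟨0, by omega⟩
  map_add' p q := by simp [Pi.add_apply]; ring
  map_smul' t p := by simp [Pi.smul_apply]; ring

private def prodSubEquiv {R M N : Type*} [CommRing R] [AddCommGroup M] [AddCommGroup N]
    [Module R M] [Module R N] (p : Submodule R M) (q : Submodule R N) :
    (p.prod q) ≃ₗ[R] p × q where
  toFun x := (⟨x.val.1, x.prop.1⟩, ⟨x.val.2, x.prop.2⟩)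
  invFun y := ⟨(y.1.val, y.2.val), ⟨y.1.prop, y.2.prop⟩⟩
  left_inv x := rfl
  right_inv y := rfl
  map_add' x y := rfl
  map_smul' t x := rfl

private lemma twoSum_eq_map {n n' : ℕ} (C : Code n) (C' : Code n') (hn : 3 ≤ n) (hn' : 3 ≤ n') :
    twoSum C C' hn hn' =
      Submodule.map (tsLin n n')
        (C.prod C' ⊓ LinearMap.ker (fuseL n n' (by omega) (by omega))) := by
  ext x
  constructor
  · rintro ⟨c, hc, c', hc', he, hx⟩
    refine ⟨(c, c'), Submodule.mem_inf.mpr ⟨Submodule.mem_prod.mpr ⟨hc, hc'⟩, ?_⟩, ?_⟩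
    · show c ⟨n-1, by omega⟩ - c' ⟨0, by omega⟩ = 0
      exact sub_eq_zero.mpr he
    · funext i
      exact (hx i).symm
  · rintro ⟨⟨c, c'⟩, hmem, rfl⟩
    have h1 := (Submodule.mem_inf.mp hmem).1
    have h2 : c ⟨n-1, by omega⟩ - c' ⟨0, by omega⟩ = 0 := (Submodule.mem_inf.mp hmem).2
    exact ⟨c, (Submodule.mem_prod.mp h1).1, c', (Submodule.mem_prod.mp h1).2,
      sub_eq_zero.mp h2, fun i => rfl⟩

private lemma twoSum_dim {n n' : ℕ} (C : Code n) (C' : Code n') (h : TwoSummable C C') :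
    codeDim (twoSum C C' h.1 h.2.1) + 1 = codeDim C + codeDim C' := by
  classical
  have hn := h.1
  have hn' := h.2.1
  set P := C.prod C' with hPdef
  set L := fuseL n n' (by omega : 1 ≤ n) (by omega : 1 ≤ n') with hLdef
  set K := P ⊓ LinearMap.ker L with hKdef
  set g := L.comp P.subtype with hgdef
  -- K as the image of ker g
  have hker_map : K = Submodule.map P.subtype (LinearMap.ker g) := by
    ext x
    constructor
    · intro hx
      exact ⟨⟨x, (Submodule.mem_inf.mp hx).1⟩, (Submodule.mem_inf.mp hx).2, rfl⟩
    · rintro ⟨⟨y, hy⟩, hy2, rfl⟩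
      exact Submodule.mem_inf.mpr ⟨hy, hy2⟩
  -- injectivity on K
  have hinj : Function.Injective ((tsLin n n').comp K.subtype) := by
    rw [← LinearMap.ker_eq_bot, LinearMap.ker_eq_bot']
    rintro ⟨⟨c, c'⟩, hmem⟩ hm
    have hc : c ∈ C := (Submodule.mem_prod.mp (Submodule.mem_inf.mp hmem).1).1
    have hL : c ⟨n-1, by omega⟩ - c' ⟨0, by omega⟩ = 0 := (Submodule.mem_inf.mp hmem).2
    have h0 : ∀ j : Fin n, (j : ℕ) < n - 1 → c j = 0 := by
      intro j hj
      have h2 : tsLin n n' (c, c') (⟨(j : ℕ), by have := j.isLt; omega⟩ : Fin (n-1+(n'-1))) = 0 :=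
        congr_fun hm _
      rw [tsLin_apply, dif_pos hj] at h2
      exact h2
    have h0' : ∀ j : Fin n', 1 ≤ (j : ℕ) → c' j = 0 := by
      intro j hj
      have h2 : tsLin n n' (c, c')
          (⟨n - 1 + ((j : ℕ) - 1), by have := j.isLt; omega⟩ : Fin (n-1+(n'-1))) = 0 :=
        congr_fun hm _
      rw [tsLin_apply, dif_neg (show ¬ (n - 1 + ((j : ℕ) - 1) < n - 1) by omega)] at h2
      have h3 : c' ⟨n - 1 + ((j : ℕ) - 1) - (n - 1) + 1, by have := j.isLt; omega⟩ = c' j :=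
        congrArg c' (Fin.ext (show n - 1 + ((j : ℕ) - 1) - (n - 1) + 1 = (j : ℕ) by omega))
      rw [← h3]
      exact h2
    have hclast : c ⟨n - 1, by omega⟩ = 0 := by
      by_contra hne
      have h1 : c ⟨n - 1, by omega⟩ = 1 := zmod2_eq_one hne
      apply h.2.2.1
      have hcu : c = unitLast n := by
        funext j
        by_cases hj : (j : ℕ) = n - 1
        · have hje : j = ⟨n - 1, by omega⟩ := Fin.ext hj
          rw [hje, h1]
          simp [unitLast]
        · rw [h0 j (by have := j.isLt; omega)]
          simp [unitLast, hj]
      rw [← hcu]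
      exact hc
    have hc0 : c = 0 := by
      funext j
      by_cases hj : (j : ℕ) = n - 1
      · have hje : j = ⟨n - 1, by omega⟩ := Fin.ext hj
        rw [hje]; exact hclast
      · exact h0 j (by have := j.isLt; omega)
    have hc'first : c' ⟨0, by omega⟩ = 0 := by
      have h3 : c ⟨n-1, by omega⟩ = c' ⟨0, by omega⟩ := sub_eq_zero.mp hL
      rw [← h3]; exact hclast
    have hc'0 : c' = 0 := by
      funext j
      by_cases hj : (j : ℕ) = 0
      · have hje : j = ⟨0, by omega⟩ := Fin.ext hj
        rw [hje]; exact hc'first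
      · exact h0' j (by omega)
    exact Subtype.ext (Prod.ext hc0 hc'0)
  -- range of g is everything
  have hsurj : LinearMap.range g = ⊤ := by
    rw [LinearMap.range_eq_top]
    intro y
    obtain ⟨c, hc, hcs⟩ : ∃ c ∈ C, ∑ i, unitLast n i * c i ≠ 0 := by
      by_contra hcon
      push_neg at hcon
      exact h.2.2.2.1 hcon
    have hsum : ∑ i, unitLast n i * c i = c ⟨n - 1, by omega⟩ := by
      rw [Finset.sum_eq_single (⟨n - 1, by omega⟩ : Fin n)]
      · simp [unitLast]
      · intro b _ hb
        have hbv : (b : ℕ) ≠ n - 1 := fun hbe => hb (Fin.ext hbe)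
        simp [unitLast, hbv]
      · intro habs; exact absurd (Finset.mem_univ _) habs
    rw [hsum] at hcs
    have h1 : c ⟨n - 1, by omega⟩ = 1 := zmod2_eq_one hcs
    refine ⟨⟨(y • c, 0),
      Submodule.mem_prod.mpr ⟨Submodule.smul_mem _ _ hc, Submodule.zero_mem _⟩⟩, ?_⟩
    show (y • c) ⟨n - 1, _⟩ - (0 : Fin n' → ZMod 2) ⟨0, _⟩ = y
    simp [Pi.smul_apply, h1]
  have hr : Module.finrank (ZMod 2) (LinearMap.range g) = 1 := by
    rw [hsurj, finrank_top, Module.finrank_self]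
  have hPrank : Module.finrank (ZMod 2) P = codeDim C + codeDim C' := by
    rw [LinearEquiv.finrank_eq (prodSubEquiv C C'), Module.finrank_prod]
    rfl
  have rn := LinearMap.finrank_range_add_finrank_ker g
  rw [hr, hPrank] at rn
  have e1 : codeDim (twoSum C C' h.1 h.2.1) = Module.finrank (ZMod 2) K := by
    show Module.finrank (ZMod 2) (twoSum C C' h.1 h.2.1) = _
    rw [twoSum_eq_map C C' h.1 h.2.1]
    conv_lhs => rw [show (C.prod C' ⊓ LinearMap.ker (fuseL n n' (by omega) (by omega))) = K from rfl]
    rw [← Submodule.range_subtype K, ← LinearMap.range_comp]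
    rw [LinearMap.finrank_range_of_inj hinj]
    rw [Submodule.range_subtype]
  have e2 : Module.finrank (ZMod 2) K = Module.finrank (ZMod 2) (LinearMap.ker g) := by
    rw [hker_map]
    exact Submodule.finrank_map_subtype_eq P (LinearMap.ker g)
  rw [e1, e2, ← rn]
  omega

private lemma mem_shorten {N : ℕ} (E : Code N) (Y : Finset (Fin N)) (w : Fin Yᶜ.card → ZMod 2) :
    w ∈ shortenCode E Y ↔ ∃ c, (c ∈ E ∧ ∀ i ∈ Y, c i = 0) ∧
      (∀ j, w j = c ((Yᶜ.orderIsoOfFin rfl j) : Fin N)) := by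
  constructor
  · intro hw
    obtain ⟨c, hc, hcw⟩ := Submodule.mem_map.mp hw
    exact ⟨c, ⟨(Submodule.mem_inf.mp hc).1, (Submodule.mem_inf.mp hc).2⟩,
      fun j => (congr_fun hcw j).symm⟩
  · rintro ⟨c, ⟨hc1, hc2⟩, hcw⟩
    exact Submodule.mem_map.mpr ⟨c, Submodule.mem_inf.mpr ⟨hc1, hc2⟩,
      funext fun j => (hcw j).symm⟩

private lemma shorten_norm {N : ℕ} (Y : Finset (Fin N)) (c : Fin N → ZMod 2)
    (hc : ∀ i ∈ Y, c i = 0) :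
    hammingNorm (fun j => c ((Yᶜ.orderIsoOfFin rfl j) : Fin N)) = hammingNorm c := by
  apply hn_comp
  · intro a b hab
    exact (Yᶜ.orderIsoOfFin rfl).injective (Subtype.ext hab)
  · intro i hi
    apply hc
    by_contra hiY
    have hiYc : i ∈ Yᶜ := Finset.mem_compl.mpr hiY
    exact hi ((Yᶜ.orderIsoOfFin rfl).symm ⟨i, hiYc⟩)
      (congrArg Subtype.val ((Yᶜ.orderIsoOfFin rfl).apply_symm_apply ⟨i, hiYc⟩))

private lemma twoSum_dist_left {n n' : ℕ} (C : Code n) (C' : Code n') (h : TwoSummable C C')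
    (hex : ∃ c ∈ shortenCode C (Finset.univ.filter (fun i : Fin n => (i : ℕ) = n - 1)), c ≠ 0) :
    (∃ c ∈ twoSum C C' h.1 h.2.1, c ≠ 0) ∧
      minDist (twoSum C C' h.1 h.2.1) ≤
        minDist (shortenCode C (Finset.univ.filter (fun i : Fin n => (i : ℕ) = n - 1))) := by
  classical
  have hn := h.1
  have hn' := h.2.1
  set Y := Finset.univ.filter (fun i : Fin n => (i : ℕ) = n - 1) with hYdef
  set D := shortenCode C Y with hDdef
  have hset : {w | ∃ c ∈ D, c ≠ 0 ∧ hammingNorm c = w}.Nonempty := by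
    obtain ⟨w, hw, hwne⟩ := hex
    exact ⟨hammingNorm w, w, hw, hwne, rfl⟩
  obtain ⟨w, hwD, hwne, hwnorm⟩ := Nat.sInf_mem hset
  obtain ⟨c, ⟨hcC, hcY⟩, hcw⟩ := (mem_shorten C Y w).mp hwD
  have hclast : c ⟨n - 1, by omega⟩ = 0 :=
    hcY _ (Finset.mem_filter.mpr ⟨Finset.mem_univ _, rfl⟩)
  have hnw : hammingNorm w = hammingNorm c := by
    rw [show w = fun j => c ((Yᶜ.orderIsoOfFin rfl j) : Fin n) from funext hcw]
    exact shorten_norm Y c hcY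
  set x : Fin (n-1+(n'-1)) → ZMod 2 := tsLin n n' (c, 0) with hxdef
  have hxmem : x ∈ twoSum C C' h.1 h.2.1 := by
    refine ⟨c, hcC, 0, Submodule.zero_mem _, ?_, fun i => rfl⟩
    exact hclast
  have hnx : hammingNorm x = hammingNorm c := by
    have hcomp : (fun j : Fin n =>
        x (⟨(j : ℕ), by have := j.isLt; omega⟩ : Fin (n-1+(n'-1)))) = c := by
      funext j
      by_cases hj : (j : ℕ) < n - 1
      · rw [hxdef, tsLin_apply, dif_pos hj]
      · rw [hxdef, tsLin_apply, dif_neg hj]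
        have hje : j = ⟨n - 1, by omega⟩ :=
          Fin.ext (show (j : ℕ) = n - 1 by have := j.isLt; omega)
        exact ((congrArg c hje).trans hclast).symm
    have hmain := hn_comp (fun j : Fin n =>
        (⟨(j : ℕ), by have := j.isLt; omega⟩ : Fin (n-1+(n'-1)))) ?_ x ?_
    · rw [hcomp] at hmain
      exact hmain.symm
    · intro a b hab
      have hv := congrArg Fin.val hab
      exact Fin.ext hv
    · intro i hi
      by_cases hlt : (i : ℕ) < n
      · exact absurd (Fin.ext (rfl : (i : ℕ) = (i : ℕ))) (hi ⟨(i : ℕ), hlt⟩)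
      · rw [hxdef, tsLin_apply, dif_neg (show ¬ ((i : ℕ) < n - 1) by omega)]
        rfl
  have hxw : hammingNorm x = hammingNorm w := hnx.trans hnw.symm
  have hxne : x ≠ 0 := by
    intro h0
    apply hwne
    apply hammingNorm_eq_zero.mp
    rw [← hxw, h0, hammingNorm_zero]
  refine ⟨⟨x, hxmem, hxne⟩, ?_⟩
  calc minDist (twoSum C C' h.1 h.2.1) ≤ hammingNorm x := Nat.sInf_le ⟨x, hxmem, hxne, rfl⟩
    _ = hammingNorm w := hxw
    _ = minDist D := hwnorm

private lemma twoSum_dist_right {n n' : ℕ} (C : Code n) (C' : Code n') (h : TwoSummable C C')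
    (hex : ∃ c ∈ shortenCode C' (Finset.univ.filter (fun i : Fin n' => (i : ℕ) = 0)), c ≠ 0) :
    (∃ c ∈ twoSum C C' h.1 h.2.1, c ≠ 0) ∧
      minDist (twoSum C C' h.1 h.2.1) ≤
        minDist (shortenCode C' (Finset.univ.filter (fun i : Fin n' => (i : ℕ) = 0))) := by
  classical
  have hn := h.1
  have hn' := h.2.1
  set Y := Finset.univ.filter (fun i : Fin n' => (i : ℕ) = 0) with hYdef
  set D := shortenCode C' Y with hDdef
  have hset : {w | ∃ c ∈ D, c ≠ 0 ∧ hammingNorm c = w}.Nonempty := by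
    obtain ⟨w, hw, hwne⟩ := hex
    exact ⟨hammingNorm w, w, hw, hwne, rfl⟩
  obtain ⟨w, hwD, hwne, hwnorm⟩ := Nat.sInf_mem hset
  obtain ⟨c', ⟨hcC, hcY⟩, hcw⟩ := (mem_shorten C' Y w).mp hwD
  have hcfirst : c' ⟨0, by omega⟩ = 0 :=
    hcY _ (Finset.mem_filter.mpr ⟨Finset.mem_univ _, rfl⟩)
  have hnw : hammingNorm w = hammingNorm c' := by
    rw [show w = fun j => c' ((Yᶜ.orderIsoOfFin rfl j) : Fin n') from funext hcw]
    exact shorten_norm Y c' hcY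
  set x : Fin (n-1+(n'-1)) → ZMod 2 := tsLin n n' (0, c') with hxdef
  have hxmem : x ∈ twoSum C C' h.1 h.2.1 := by
    refine ⟨0, Submodule.zero_mem _, c', hcC, ?_, fun i => rfl⟩
    exact hcfirst.symm
  set ι : Fin n' → Fin (n-1+(n'-1)) := fun j =>
    if (j : ℕ) = 0 then ⟨0, by omega⟩ else ⟨n - 2 + (j : ℕ), by have := j.isLt; omega⟩
    with hιdef
  have hnx : hammingNorm x = hammingNorm c' := by
    have hcomp : (fun j : Fin n' => x (ι j)) = c' := by
      funext j
      by_cases hj : (j : ℕ) = 0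
      · rw [hιdef]
        simp only [if_pos hj]
        rw [hxdef, tsLin_apply, dif_pos (show (0 : ℕ) < n - 1 by omega)]
        have hje : j = ⟨0, by omega⟩ := Fin.ext hj
        rw [hje]
        exact hcfirst.symm
      · rw [hιdef]
        simp only [if_neg hj]
        rw [hxdef, tsLin_apply, dif_neg (show ¬ (n - 2 + (j : ℕ) < n - 1) by omega)]
        exact congrArg c' (Fin.ext (show n - 2 + (j : ℕ) - (n - 1) + 1 = (j : ℕ) by omega))
    have hmain := hn_comp ι ?_ x ?_
    · rw [hcomp] at hmain
      exact hmain.symm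
    · intro a b hab
      by_cases ha : (a : ℕ) = 0 <;> by_cases hb : (b : ℕ) = 0
      · exact Fin.ext (ha.trans hb.symm)
      · rw [hιdef] at hab
        simp only [if_pos ha, if_neg hb] at hab
        have hv : (0 : ℕ) = n - 2 + (b : ℕ) := congrArg Fin.val hab
        omega
      · rw [hιdef] at hab
        simp only [if_neg ha, if_pos hb] at hab
        have hv : n - 2 + (a : ℕ) = 0 := congrArg Fin.val hab
        omega
      · rw [hιdef] at hab
        simp only [if_neg ha, if_neg hb] at hab
        have hv : n - 2 + (a : ℕ) = n - 2 + (b : ℕ) := congrArg Fin.val hab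
        exact Fin.ext (by omega)
    · intro i hi
      by_cases h1 : (i : ℕ) = 0
      · refine absurd ?_ (hi ⟨0, by omega⟩)
        rw [hιdef]
        simp only [if_pos rfl]
        exact Fin.ext h1.symm
      · by_cases h2 : (i : ℕ) < n - 1
        · rw [hxdef, tsLin_apply, dif_pos h2]
          rfl
        · exfalso
          have hjlt : (i : ℕ) - (n - 1) + 1 < n' := by have := i.isLt; omega
          apply hi ⟨(i : ℕ) - (n - 1) + 1, hjlt⟩
          rw [hιdef]
          simp only [if_neg (show ¬ ((i : ℕ) - (n - 1) + 1 = 0) by omega)]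
          exact Fin.ext (show n - 2 + ((i : ℕ) - (n - 1) + 1) = (i : ℕ) by omega)
  have hxw : hammingNorm x = hammingNorm w := hnx.trans hnw.symm
  have hxne : x ≠ 0 := by
    intro h0
    apply hwne
    apply hammingNorm_eq_zero.mp
    rw [← hxw, h0, hammingNorm_zero]
  refine ⟨⟨x, hxmem, hxne⟩, ?_⟩
  calc minDist (twoSum C C' h.1 h.2.1) ≤ hammingNorm x := Nat.sInf_le ⟨x, hxmem, hxne, rfl⟩
    _ = hammingNorm w := hxw
    _ = minDist D := hwnorm

end TwoSumAux

/-- dimension and minimum distance of a 2-sum. -/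
theorem twoSum_dim_and_dist {n n' : ℕ} (C : Code n) (C' : Code n')
    (h : TwoSummable C C') :
    codeDim (twoSum C C' h.1 h.2.1) + 1 = codeDim C + codeDim C' ∧
    ((∃ c ∈ shortenCode C (Finset.univ.filter (fun i : Fin n => (i : ℕ) = n - 1)),
        c ≠ 0) →
      (∃ c ∈ twoSum C C' h.1 h.2.1, c ≠ 0) ∧
      minDist (twoSum C C' h.1 h.2.1) ≤
        minDist (shortenCode C
          (Finset.univ.filter (fun i : Fin n => (i : ℕ) = n - 1)))) ∧
    ((∃ c ∈ shortenCode C' (Finset.univ.filter (fun i : Fin n' => (i : ℕ) = 0)),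
        c ≠ 0) →
      (∃ c ∈ twoSum C C' h.1 h.2.1, c ≠ 0) ∧
      minDist (twoSum C C' h.1 h.2.1) ≤
        minDist (shortenCode C'
          (Finset.univ.filter (fun i : Fin n' => (i : ℕ) = 0)))) :=
  ⟨twoSum_dim C C' h, fun hex => twoSum_dist_left C C' h hex,
    fun hex => twoSum_dist_right C C' h hex⟩
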